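/- For every real K > 0 there exists η > 0 such that the series Σ_{n≥2} (1/n!) · Σ_{T} ∏_{i=1}^{n} (d_T(i) − 1)! · K^{d_T(i)} · η^{d_T(i)} converges, where the inner sum runs over all trees T on the labeled vertex set {1, …, n} and d_T(i) denotes the degree of vertex i in T. -/

import Mathlib

open scoped Classical
open Finset

lemma fiber_card_cons {m : ℕ} {β : Type*} [Fintype β] [DecidableEq β] (b : β) (f : Fin m → β) (b' : β) :
    (univ.filter (fun a : Fin (m+1) => Fin.cons (α := fun _ => β) b f a = b')).card
      = (univ.filter (fun a : Fin m => f a = b')).card + if b = b' then 1 else 0 := by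
  rw [Finset.card_filter, Finset.card_filter, Fin.sum_univ_succ]
  simp [add_comm]

lemma sum_prod_fiber_fact (m : ℕ) (β : Type*) [Fintype β] [DecidableEq β] :
    ∑ f : Fin m → β, ∏ b : β, Nat.factorial (univ.filter (fun a => f a = b)).card
      = Nat.ascFactorial (Fintype.card β) m := by
  induction m with
  | zero => simp
  | succ m ih =>
    rw [Nat.ascFactorial_succ, ← ih]
    rw [← (Fin.consEquiv (fun _ => β)).sum_comp]
    simp only [Fin.consEquiv, Equiv.coe_fn_mk]
    rw [Fintype.sum_prod_type]
    have key : ∀ (b : β) (f : Fin m → β),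
        (∏ b' : β, Nat.factorial (univ.filter (fun a : Fin (m+1) => Fin.cons (α := fun _ => β) b f a = b')).card)
        = ((univ.filter (fun a : Fin m => f a = b)).card + 1) *
          ∏ b' : β, Nat.factorial (univ.filter (fun a : Fin m => f a = b')).card := by
      intro b f
      simp only [fiber_card_cons]
      rw [← Finset.mul_prod_erase univ _ (mem_univ b),
          ← Finset.mul_prod_erase univ
            (fun b' => Nat.factorial (univ.filter (fun a : Fin m => f a = b')).card) (mem_univ b)]
      have h1 : ∀ b' ∈ univ.erase b,
          Nat.factorial ((univ.filter (fun a : Fin m => f a = b')).card + if b = b' then 1 else 0)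
          = Nat.factorial (univ.filter (fun a : Fin m => f a = b')).card := by
        intro b' hb'
        rw [if_neg (Finset.ne_of_mem_erase hb').symm, Nat.add_zero]
      rw [Finset.prod_congr rfl h1, if_pos rfl, Nat.factorial_succ, mul_assoc]
    calc ∑ b : β, ∑ f : Fin m → β,
          ∏ b' : β, Nat.factorial (univ.filter (fun a : Fin (m+1) => Fin.cons (α := fun _ => β) b f a = b')).card
        = ∑ f : Fin m → β, ∑ b : β, ((univ.filter (fun a : Fin m => f a = b)).card + 1) *
            ∏ b' : β, Nat.factorial (univ.filter (fun a : Fin m => f a = b')).card := by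
          rw [Finset.sum_comm]
          exact Finset.sum_congr rfl fun f _ => Finset.sum_congr rfl fun b _ => key b f
      _ = ∑ f : Fin m → β, (Fintype.card β + m) *
            ∏ b' : β, Nat.factorial (univ.filter (fun a : Fin m => f a = b')).card := by
          refine Finset.sum_congr rfl fun f _ => ?_
          rw [← Finset.sum_mul]
          congr 1
          rw [Finset.sum_add_distrib]
          simp only [Finset.sum_const, smul_eq_mul, mul_one, Finset.card_univ]
          rw [← Finset.card_eq_sum_card_fiberwise (fun a _ => Finset.mem_univ (f a))]
          simp [add_comm, Fintype.card_fin]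
      _ = (Fintype.card β + m) * ∑ f : Fin m → β,
            ∏ b' : β, Nat.factorial (univ.filter (fun a : Fin m => f a = b')).card := by
          rw [Finset.mul_sum]

lemma sum_prod_fiber_fact' (α β : Type*) [Fintype α] [DecidableEq α] [Fintype β] [DecidableEq β] :
    ∑ f : α → β, ∏ b : β, Nat.factorial (univ.filter (fun a => f a = b)).card
      = Nat.ascFactorial (Fintype.card β) (Fintype.card α) := by
  classical
  have e := Fintype.equivFin α
  rw [← sum_prod_fiber_fact (Fintype.card α) β]
  apply Fintype.sum_bijective (fun f : α → β => f ∘ e.symm)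
    (Equiv.arrowCongr e (Equiv.refl β)).bijective
  intro f
  refine Finset.prod_congr rfl fun b _ => ?_
  congr 1
  rw [← Fintype.card_subtype, ← Fintype.card_subtype]
  exact Fintype.card_congr (e.subtypeEquiv (fun a => by simp))

section Tree
open SimpleGraph

variable {V : Type*} [DecidableEq V]

noncomputable def parentOf (T : SimpleGraph V) (hc : T.Connected) (r v : V) : V :=
  (((hc v r).some.toPath : T.Path v r) : T.Walk v r).getVert 1

lemma parentOf_self (T : SimpleGraph V) (hc : T.Connected) (r : V) :
    parentOf T hc r r = r := by
  unfold parentOf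
  rw [SimpleGraph.Path.loop_eq ((hc r r).some.toPath)]
  rfl

lemma adj_parentOf (T : SimpleGraph V) (hc : T.Connected) (r v : V) (hv : v ≠ r) :
    T.Adj v (parentOf T hc r v) := by
  set p : T.Path v r := (hc v r).some.toPath with hp
  have hlen : 0 < (p : T.Walk v r).length := by
    rcases Nat.eq_zero_or_pos (p : T.Walk v r).length with h | h
    · exact absurd (SimpleGraph.Walk.eq_of_length_eq_zero h) hv
    · exact h
  have := (p : T.Walk v r).adj_getVert_succ hlen
  simpa [parentOf, ← hp] using this

lemma parentOf_eq_of_adj (T : SimpleGraph V) (hc : T.Connected) (ha : T.IsAcyclic)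
    (r : V) {u v : V} (h : T.Adj u v) :
    parentOf T hc r u = v ∨ parentOf T hc r v = u := by
  have huniq := SimpleGraph.isAcyclic_iff_path_unique.mp ha
  set p : T.Path v r := (hc v r).some.toPath with hp
  by_cases hu : u ∈ (p : T.Walk v r).support
  · right
    -- u is on the path from v to r; show it is the second vertex
    have hq : ((p : T.Walk v r).takeUntil u hu).IsPath := p.2.takeUntil hu
    have hsing : (⟨_, hq⟩ : T.Path v u) = SimpleGraph.Path.singleton h.symm := huniq _ _
    have hq1 : (p : T.Walk v r).takeUntil u hu
        = SimpleGraph.Walk.cons h.symm SimpleGraph.Walk.nil := by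
      have := congrArg Subtype.val hsing
      simpa [SimpleGraph.Path.singleton] using this
    have hspec := (p : T.Walk v r).take_spec hu
    rw [hq1] at hspec
    have : (p : T.Walk v r) =
        SimpleGraph.Walk.cons h.symm ((p : T.Walk v r).dropUntil u hu) := hspec.symm
    show (p : T.Walk v r).getVert 1 = u
    rw [this]
    simp [SimpleGraph.Walk.getVert_cons_succ]
  · left
    have hw : (SimpleGraph.Walk.cons h (p : T.Walk v r)).IsPath := p.2.cons hu
    have : ((hc u r).some.toPath : T.Path u r) = ⟨_, hw⟩ := huniq _ _
    show ((((hc u r).some.toPath) : T.Walk u r)).getVert 1 = v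
    rw [this]
    simp [SimpleGraph.Walk.getVert_cons_succ]

lemma adj_iff_parentOf (T : SimpleGraph V) (hc : T.Connected) (ha : T.IsAcyclic)
    (r : V) (u v : V) :
    T.Adj u v ↔ (u ≠ r ∧ parentOf T hc r u = v) ∨ (v ≠ r ∧ parentOf T hc r v = u) := by
  constructor
  · intro h
    rcases parentOf_eq_of_adj T hc ha r h with h1 | h1
    · left
      refine ⟨?_, h1⟩
      rintro rfl
      rw [parentOf_self] at h1
      exact h.ne h1
    · right
      refine ⟨?_, h1⟩
      rintro rfl
      rw [parentOf_self] at h1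
      exact h.ne h1.symm
  · rintro (⟨hu, rfl⟩ | ⟨hv, rfl⟩)
    · exact adj_parentOf T hc r u hu
    · exact (adj_parentOf T hc r v hv).symm

lemma choose_le_two_pow (N k : ℕ) : N.choose k ≤ 2 ^ N := by
  rcases le_or_gt k N with h | h
  · calc N.choose k ≤ ∑ m ∈ Finset.range (N + 1), N.choose m :=
          Finset.single_le_sum (fun i _ => Nat.zero_le _)
            (Finset.mem_range.mpr (Nat.lt_succ_of_le h))
    _ = 2 ^ N := Nat.sum_range_choose N
  · rw [Nat.choose_eq_zero_of_lt h]; exact Nat.zero_le _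

lemma degree_le_childCount [Fintype V] (T : SimpleGraph V) [DecidableRel T.Adj]
    (hc : T.Connected) (ha : T.IsAcyclic) (r i : V) :
    T.degree i ≤
      (univ.filter (fun v : {x : V // x ≠ r} => parentOf T hc r (v : V) = i)).card + 1 := by
  rw [← SimpleGraph.card_neighborFinset_eq_degree]
  have hsub : T.neighborFinset i ⊆
      (univ.filter (fun v : {x : V // x ≠ r} => parentOf T hc r (v : V) = i)).image
          (fun v : {x : V // x ≠ r} => (v : V))
        ∪ {parentOf T hc r i} := by
    intro j hj
    rw [SimpleGraph.mem_neighborFinset] at hj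
    rcases (adj_iff_parentOf T hc ha r i j).mp hj with ⟨h1, h2⟩ | ⟨h1, h2⟩
    · exact Finset.mem_union_right _ (Finset.mem_singleton.mpr h2.symm)
    · exact Finset.mem_union_left _
        (Finset.mem_image.mpr ⟨⟨j, h1⟩, Finset.mem_filter.mpr ⟨Finset.mem_univ _, h2⟩, rfl⟩)
  calc (T.neighborFinset i).card ≤ _ := Finset.card_le_card hsub
    _ ≤ ((univ.filter (fun v : {x : V // x ≠ r} => parentOf T hc r (v : V) = i)).image
          (fun v : {x : V // x ≠ r} => (v : V))).card + 1 := by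
        refine (Finset.card_union_le _ _).trans ?_
        simp
    _ ≤ _ + 1 := by gcongr; exact Finset.card_image_le

set_option maxHeartbeats 1000000 in
lemma sum_trees_le (V : Type*) [Fintype V] [DecidableEq V] (r : V) :
    ∑ T ∈ univ.filter (fun T : SimpleGraph V => T.Connected ∧ T.IsAcyclic),
        ∏ i : V, Nat.factorial (T.degree i - 1)
      ≤ Nat.ascFactorial (Fintype.card V) (Fintype.card {x : V // x ≠ r}) := by
  classical
  set g : SimpleGraph V → ({x : V // x ≠ r} → V) := fun T =>
    if h : T.Connected then (fun v => parentOf T h r (v : V)) else fun _ => r with hg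
  set s := univ.filter (fun T : SimpleGraph V => T.Connected ∧ T.IsAcyclic) with hs
  have hginj : ∀ T1 ∈ s, ∀ T2 ∈ s, g T1 = g T2 → T1 = T2 := by
    intro T1 h1 T2 h2 hEq
    rw [hs, Finset.mem_filter] at h1 h2
    obtain ⟨-, hc1, ha1⟩ := h1
    obtain ⟨-, hc2, ha2⟩ := h2
    rw [hg] at hEq
    simp only [dif_pos hc1, dif_pos hc2] at hEq
    ext u v
    rw [adj_iff_parentOf T1 hc1 ha1 r, adj_iff_parentOf T2 hc2 ha2 r]
    have hpar : ∀ w : V, w ≠ r → parentOf T1 hc1 r w = parentOf T2 hc2 r w := by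
      intro w hw
      exact congrFun hEq ⟨w, hw⟩
    constructor
    · rintro (⟨h3, h4⟩ | ⟨h3, h4⟩)
      · exact Or.inl ⟨h3, (hpar u h3).symm.trans h4⟩
      · exact Or.inr ⟨h3, (hpar v h3).symm.trans h4⟩
    · rintro (⟨h3, h4⟩ | ⟨h3, h4⟩)
      · exact Or.inl ⟨h3, (hpar u h3).trans h4⟩
      · exact Or.inr ⟨h3, (hpar v h3).trans h4⟩
  have hbound : ∀ T ∈ s, ∏ i : V, Nat.factorial (T.degree i - 1)
      ≤ ∏ i : V, Nat.factorial (univ.filter (fun v : {x : V // x ≠ r} => g T v = i)).card := by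
    intro T hT
    rw [hs, Finset.mem_filter] at hT
    obtain ⟨-, hc, ha⟩ := hT
    refine Finset.prod_le_prod' fun i _ => Nat.factorial_le ?_
    have := degree_le_childCount T hc ha r i
    rw [hg]
    simp only [dif_pos hc]
    omega
  calc ∑ T ∈ s, ∏ i : V, Nat.factorial (T.degree i - 1)
      ≤ ∑ T ∈ s, ∏ i : V,
          Nat.factorial (univ.filter (fun v : {x : V // x ≠ r} => g T v = i)).card :=
        Finset.sum_le_sum hbound
    _ = ∑ f ∈ s.image g, ∏ i : V,
          Nat.factorial (univ.filter (fun v : {x : V // x ≠ r} => f v = i)).card :=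
        by rw [Finset.sum_image hginj]
    _ ≤ ∑ f : {x : V // x ≠ r} → V, ∏ i : V,
          Nat.factorial (univ.filter (fun v : {x : V // x ≠ r} => f v = i)).card :=
        Finset.sum_le_sum_of_subset (Finset.subset_univ _)
    _ = Nat.ascFactorial (Fintype.card V) (Fintype.card {x : V // x ≠ r}) :=
        sum_prod_fiber_fact' _ _
end Tree

lemma asc_le_fact_mul_pow (n : ℕ) (hn : 1 ≤ n) :
    Nat.ascFactorial n (n - 1) ≤ Nat.factorial n * 4 ^ n := by
  obtain ⟨m, rfl⟩ : ∃ m, n = m + 1 := ⟨n - 1, by omega⟩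
  rw [Nat.add_sub_cancel, Nat.ascFactorial_eq_factorial_mul_choose]
  calc Nat.factorial m * (m + m).choose m
      ≤ Nat.factorial (m + 1) * 2 ^ (m + m) :=
        Nat.mul_le_mul (Nat.factorial_le (Nat.le_succ m)) (choose_le_two_pow _ _)
    _ ≤ Nat.factorial (m + 1) * 4 ^ (m + 1) := by
        refine Nat.mul_le_mul_left _ ?_
        calc 2 ^ (m + m) = 4 ^ m := by rw [← Nat.two_mul, Nat.pow_mul]
          _ ≤ 4 ^ (m + 1) := Nat.pow_le_pow_right (by norm_num) (Nat.le_succ m)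

theorem tree_sum_series_summable (K : ℝ) (hK : 0 < K) :
    ∃ η : ℝ, 0 < η ∧
      Summable (fun n : ℕ =>
        if 2 ≤ n then
          (1 / (Nat.factorial n : ℝ)) *
            ∑ T ∈ Finset.univ.filter
                (fun T : SimpleGraph (Fin n) => T.Connected ∧ T.IsAcyclic),
              ∏ i : Fin n,
                (Nat.factorial (T.degree i - 1) : ℝ) * K ^ T.degree i * η ^ T.degree i
        else 0) := by
  refine ⟨1 / (4 * K), by positivity, ?_⟩
  set η : ℝ := 1 / (4 * K) with hη
  have hx : K * η = 1 / 4 := by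
    rw [hη]; field_simp
  have hnonneg : ∀ n : ℕ, 0 ≤ (if 2 ≤ n then
      (1 / (Nat.factorial n : ℝ)) *
        ∑ T ∈ Finset.univ.filter
            (fun T : SimpleGraph (Fin n) => T.Connected ∧ T.IsAcyclic),
          ∏ i : Fin n,
            (Nat.factorial (T.degree i - 1) : ℝ) * K ^ T.degree i * η ^ T.degree i
      else 0) := by
    intro n
    split
    · refine mul_nonneg (by positivity) (Finset.sum_nonneg fun T _ =>
        Finset.prod_nonneg fun i _ => ?_)
      have : (0:ℝ) < η := by rw [hη]; positivity
      positivity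
    · exact le_refl 0
  refine Summable.of_nonneg_of_le hnonneg ?_
    ((summable_geometric_of_lt_one (by norm_num : (0:ℝ) ≤ 1/4) (by norm_num)).mul_left 16)
  intro n
  by_cases hn : 2 ≤ n
  · rw [if_pos hn]
    have hn1 : 1 ≤ n := by omega
    -- inner product rewrite
    have hprod : ∀ T : SimpleGraph (Fin n), T.Connected → T.IsAcyclic →
        ∏ i : Fin n, (Nat.factorial (T.degree i - 1) : ℝ) * K ^ T.degree i * η ^ T.degree i
        = ((∏ i : Fin n, Nat.factorial (T.degree i - 1) : ℕ) : ℝ) * (1/4 : ℝ) ^ (2 * (n - 1)) := by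
      intro T hc ha
      have hdeg : ∑ i : Fin n, T.degree i = 2 * (n - 1) := by
        rw [SimpleGraph.sum_degrees_eq_twice_card_edges]
        have h1 := SimpleGraph.IsTree.card_edgeFinset (⟨hc, ha⟩ : T.IsTree)
        rw [Fintype.card_fin] at h1
        omega
      calc ∏ i : Fin n, (Nat.factorial (T.degree i - 1) : ℝ) * K ^ T.degree i * η ^ T.degree i
          = ∏ i : Fin n, (Nat.factorial (T.degree i - 1) : ℝ) * (K * η) ^ T.degree i := by
            refine Finset.prod_congr rfl fun i _ => ?_
            rw [mul_pow, mul_assoc]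
        _ = (∏ i : Fin n, (Nat.factorial (T.degree i - 1) : ℝ)) *
              ∏ i : Fin n, (K * η) ^ T.degree i := Finset.prod_mul_distrib
        _ = ((∏ i : Fin n, Nat.factorial (T.degree i - 1) : ℕ) : ℝ) *
              (K * η) ^ (∑ i : Fin n, T.degree i) := by
            rw [Nat.cast_prod, Finset.prod_pow_eq_pow_sum]
        _ = _ := by rw [hdeg, hx]
    have hsum : ∑ T ∈ Finset.univ.filter
            (fun T : SimpleGraph (Fin n) => T.Connected ∧ T.IsAcyclic),
          ∏ i : Fin n,
            (Nat.factorial (T.degree i - 1) : ℝ) * K ^ T.degree i * η ^ T.degree i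
        = ((∑ T ∈ Finset.univ.filter
            (fun T : SimpleGraph (Fin n) => T.Connected ∧ T.IsAcyclic),
            ∏ i : Fin n, Nat.factorial (T.degree i - 1) : ℕ) : ℝ) * (1/4 : ℝ) ^ (2 * (n - 1)) := by
      rw [Nat.cast_sum, Finset.sum_mul]
      refine Finset.sum_congr rfl fun T hT => ?_
      rw [Finset.mem_filter] at hT
      exact hprod T hT.2.1 hT.2.2
    rw [hsum]
    -- counting bound
    set r : Fin n := ⟨0, by omega⟩ with hr
    have hcard : Fintype.card {x : Fin n // x ≠ r} = n - 1 := by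
      rw [Fintype.card_subtype_compl, Fintype.card_fin, Fintype.card_subtype_eq]
    have hcount : (∑ T ∈ Finset.univ.filter
          (fun T : SimpleGraph (Fin n) => T.Connected ∧ T.IsAcyclic),
          ∏ i : Fin n, Nat.factorial (T.degree i - 1))
        ≤ Nat.factorial n * 4 ^ n := by
      calc _ ≤ Nat.ascFactorial (Fintype.card (Fin n))
                (Fintype.card {x : Fin n // x ≠ r}) := sum_trees_le (Fin n) r
        _ = Nat.ascFactorial n (n - 1) := by rw [Fintype.card_fin, hcard]
        _ ≤ Nat.factorial n * 4 ^ n := asc_le_fact_mul_pow n hn1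
    have hfactpos : (0:ℝ) < (Nat.factorial n : ℝ) := by
      exact_mod_cast Nat.factorial_pos n
    calc (1 / (Nat.factorial n : ℝ)) *
          (((∑ T ∈ Finset.univ.filter
            (fun T : SimpleGraph (Fin n) => T.Connected ∧ T.IsAcyclic),
            ∏ i : Fin n, Nat.factorial (T.degree i - 1) : ℕ) : ℝ) * (1/4 : ℝ) ^ (2 * (n - 1)))
        ≤ (1 / (Nat.factorial n : ℝ)) *
            (((Nat.factorial n * 4 ^ n : ℕ) : ℝ) * (1/4 : ℝ) ^ (2 * (n - 1))) := by
          refine mul_le_mul_of_nonneg_left ?_ (by positivity)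
          refine mul_le_mul_of_nonneg_right ?_ (by positivity)
          exact_mod_cast hcount
      _ = (4:ℝ) ^ n * (1/4 : ℝ) ^ (2 * (n - 1)) := by
          push_cast
          field_simp
      _ = 16 * (1/4 : ℝ) ^ n := by
          obtain ⟨m, rfl⟩ : ∃ m, n = m + 2 := ⟨n - 2, by omega⟩
          have : m + 2 - 1 = m + 1 := rfl
          rw [this]
          rw [show 2 * (m + 1) = (m + 2) + m by ring, pow_add, pow_add, pow_add]
          rw [show ((1:ℝ)/4) ^ m = 1 / 4 ^ m by rw [div_pow]; norm_num]
          field_simp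
          ring
  · rw [if_neg hn]
    positivity
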